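/- Let 𝒢 = (P, 𝓛) be a connected partial euclidean geometry in which every point lies on at least 2 lines and every line of the Levi graph has degree ≥ 2. Then the flats of the Levi graph of 𝒢 are exactly: the full vertex set P ∪ 𝓛, the empty set, all singletons {x} for x ∈ P ∪ 𝓛, all lines L ∈ 𝓛 (as subsets of P), and all pencils 𝓛(p) = {L ∈ 𝓛 : p ∈ L} for p ∈ P. Consequently the lattice of flats of the Levi graph satisfies the Jordan–Dedekind condition: all maximal chains have length 3. -/

import Mathlib

/-- `St(W)`: the set of vertices adjacent to every vertex of `W` (so `St(∅) = V`). -/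
def starW {V : Type*} (G : SimpleGraph V) (W : Set V) : Set V := {v | ∀ w ∈ W, G.Adj v w}

/-- The flats of `G`: all sets of the form `St(W)`, `W ⊆ V`. -/
def flats {V : Type*} (G : SimpleGraph V) : Set (Set V) := {X | ∃ W : Set V, X = starW G W}

/-- The Levi graph of a point–line incidence structure: vertices are points and lines,
with an edge `p — L` exactly when `p ∈ L`. -/
def levi {α : Type*} (L : Set (Set α)) : SimpleGraph (α ⊕ ↥L) where
  Adj x y :=
    match x, y with
    | Sum.inl p, Sum.inr l => p ∈ l.1
    | Sum.inr l, Sum.inl p => p ∈ l.1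
    | _, _ => False
  symm := ⟨by rintro (p | l) (q | m) h <;> simp_all⟩
  loopless := ⟨by rintro (p | l) h <;> simp_all⟩

namespace FlatsLeviAux

variable {α : Type*} {L : Set (Set α)}

lemma starW_empty : starW (levi L) (∅ : Set (α ⊕ ↥L)) = Set.univ := by
  ext v; simp [starW]

lemma starW_singleton_inl (p : α) :
    starW (levi L) {Sum.inl p} = {x : α ⊕ ↥L | ∃ l : ↥L, x = Sum.inr l ∧ p ∈ l.1} := by
  ext v; constructor
  · intro hv
    cases v with
    | inl q => exact absurd (hv (Sum.inl p) rfl) (fun h => h)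
    | inr m => exact ⟨m, rfl, hv (Sum.inl p) rfl⟩
  · rintro ⟨l, rfl, hpl⟩ w hw
    rw [Set.mem_singleton_iff] at hw; subst hw; exact hpl

lemma starW_singleton_inr (l : ↥L) :
    starW (levi L) {Sum.inr l} = Sum.inl '' l.1 := by
  ext v; constructor
  · intro hv
    cases v with
    | inl q => exact ⟨q, hv (Sum.inr l) rfl, rfl⟩
    | inr m => exact absurd (hv (Sum.inr l) rfl) (fun h => h)
  · rintro ⟨q, hq, rfl⟩ w hw
    rw [Set.mem_singleton_iff] at hw; subst hw; exact hq

lemma starW_mixed (p0 : α) (l0 : ↥L) :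
    starW (levi L) {Sum.inl p0, Sum.inr l0} = (∅ : Set (α ⊕ ↥L)) := by
  ext v; simp only [Set.mem_empty_iff_false, iff_false]
  intro hv
  cases v with
  | inl q => exact hv (Sum.inl p0) (Or.inl rfl)
  | inr m => exact hv (Sum.inr l0) (Or.inr rfl)

lemma starW_two_lines
    (hG2 : ∀ l ∈ L, ∀ l' ∈ L, l ≠ l' → (l ∩ l' : Set α).Subsingleton)
    {l l' : ↥L} (hne : l ≠ l') {p : α} (hp : p ∈ l.1) (hp' : p ∈ l'.1) :
    starW (levi L) {Sum.inr l, Sum.inr l'} = {Sum.inl p} := by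
  have hv12 : l.1 ≠ l'.1 := fun h => hne (Subtype.ext h)
  ext v; constructor
  · intro hv
    cases v with
    | inl q =>
      have hq : q ∈ l.1 := hv (Sum.inr l) (Or.inl rfl)
      have hq' : q ∈ l'.1 := hv (Sum.inr l') (Or.inr rfl)
      have : q = p := hG2 l.1 l.2 l'.1 l'.2 hv12 ⟨hq, hq'⟩ ⟨hp, hp'⟩
      rw [Set.mem_singleton_iff, this]
    | inr m => exact absurd (hv (Sum.inr l) (Or.inl rfl)) (fun h => h)
  · intro hv
    rw [Set.mem_singleton_iff] at hv; subst hv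
    rintro w (rfl | hw)
    · exact hp
    · rw [Set.mem_singleton_iff] at hw; subst hw; exact hp'

lemma starW_two_points
    (hG2 : ∀ l ∈ L, ∀ l' ∈ L, l ≠ l' → (l ∩ l' : Set α).Subsingleton)
    {p q : α} (hne : p ≠ q) {l : ↥L} (hp : p ∈ l.1) (hq : q ∈ l.1) :
    starW (levi L) {Sum.inl p, Sum.inl q} = {Sum.inr l} := by
  ext v; constructor
  · intro hv
    cases v with
    | inl r => exact absurd (hv (Sum.inl p) (Or.inl rfl)) (fun h => h)
    | inr m =>
      have hp' : p ∈ m.1 := hv (Sum.inl p) (Or.inl rfl)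
      have hq' : q ∈ m.1 := hv (Sum.inl q) (Or.inr rfl)
      have : m = l := by
        by_contra hml
        exact hne (hG2 m.1 m.2 l.1 l.2 (fun h => hml (Subtype.ext h)) ⟨hp', hp⟩ ⟨hq', hq⟩)
      rw [Set.mem_singleton_iff, this]
  · intro hv
    rw [Set.mem_singleton_iff] at hv; subst hv
    rintro w (rfl | hw)
    · exact hp
    · rw [Set.mem_singleton_iff] at hw; subst hw; exact hq

lemma sub_two_lines
    (hG2 : ∀ l ∈ L, ∀ l' ∈ L, l ≠ l' → (l ∩ l' : Set α).Subsingleton)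
    {W : Set (α ⊕ ↥L)} {l m : ↥L} (hl : Sum.inr l ∈ W) (hm : Sum.inr m ∈ W)
    (hne : l ≠ m) : (starW (levi L) W).Subsingleton := by
  have key : ∀ u ∈ starW (levi L) W, ∃ q, u = Sum.inl q ∧ q ∈ l.1 ∩ m.1 := by
    intro u hu
    cases u with
    | inl q => exact ⟨q, rfl, hu (Sum.inr l) hl, hu (Sum.inr m) hm⟩
    | inr n => exact absurd (hu (Sum.inr l) hl) (fun h => h)
  intro v hv v' hv'
  obtain ⟨q, rfl, hq⟩ := key v hv
  obtain ⟨q', rfl, hq'⟩ := key v' hv'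
  have : q = q' := hG2 l.1 l.2 m.1 m.2 (fun h => hne (Subtype.ext h)) hq hq'
  rw [this]

lemma sub_two_points
    (hG2 : ∀ l ∈ L, ∀ l' ∈ L, l ≠ l' → (l ∩ l' : Set α).Subsingleton)
    {W : Set (α ⊕ ↥L)} {p q : α} (hp : Sum.inl p ∈ W) (hq : Sum.inl q ∈ W)
    (hne : p ≠ q) : (starW (levi L) W).Subsingleton := by
  have key : ∀ u ∈ starW (levi L) W, ∃ n : ↥L, u = Sum.inr n ∧ p ∈ n.1 ∧ q ∈ n.1 := by
    intro u hu
    cases u with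
    | inl r => exact absurd (hu (Sum.inl p) hp) (fun h => h)
    | inr n => exact ⟨n, rfl, hu (Sum.inl p) hp, hu (Sum.inl q) hq⟩
  intro v hv v' hv'
  obtain ⟨n, rfl, hn1, hn2⟩ := key v hv
  obtain ⟨n', rfl, hn1', hn2'⟩ := key v' hv'
  have : n = n' := by
    by_contra hnn
    exact hne (hG2 n.1 n.2 n'.1 n'.2 (fun h => hnn (Subtype.ext h)) ⟨hn1, hn1'⟩ ⟨hn2, hn2'⟩)
  rw [this]

/-- Classification of flats of the Levi graph. -/
lemma flats_iff [Nonempty α] (hL : L.Nonempty)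
    (hG2 : ∀ l ∈ L, ∀ l' ∈ L, l ≠ l' → (l ∩ l' : Set α).Subsingleton)
    (hG3 : ∀ l ∈ L, ∃ p ∈ l, ∃ q ∈ l, p ≠ q)
    (hdeg : ∀ p : α, ∃ l ∈ L, ∃ l' ∈ L, l ≠ l' ∧ p ∈ l ∧ p ∈ l')
    (X : Set (α ⊕ ↥L)) :
    X ∈ flats (levi L) ↔
      X = Set.univ ∨ X = ∅ ∨ (∃ x, X = {x}) ∨ (∃ l : ↥L, X = Sum.inl '' l.1) ∨
        (∃ p : α, X = {x : α ⊕ ↥L | ∃ l : ↥L, x = Sum.inr l ∧ p ∈ l.1}) := by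
  constructor
  · rintro ⟨W, rfl⟩
    rcases Set.eq_empty_or_nonempty {p : α | Sum.inl p ∈ W} with hp | ⟨p1, hp1⟩ <;>
      rcases Set.eq_empty_or_nonempty {l : ↥L | Sum.inr l ∈ W} with hl | ⟨l1, hl1⟩
    · -- W = ∅
      left
      have hW : W = ∅ := by
        ext w
        cases w with
        | inl q => simpa using (Set.eq_empty_iff_forall_notMem.mp hp q)
        | inr m => simpa using (Set.eq_empty_iff_forall_notMem.mp hl m)
      rw [hW, starW_empty]
    · -- only lines in W
      by_cases hsub : {l : ↥L | Sum.inr l ∈ W}.Subsingleton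
      · -- W = {Sum.inr l1}
        have hW : W = {Sum.inr l1} := by
          ext w
          cases w with
          | inl q =>
            simp only [Set.mem_singleton_iff]
            constructor
            · intro hw; exact absurd hw (by simpa using Set.eq_empty_iff_forall_notMem.mp hp q)
            · intro hw; exact absurd hw (by simp)
          | inr m =>
            simp only [Set.mem_singleton_iff]
            constructor
            · intro hw; rw [hsub hw hl1]
            · intro hw; rw [Sum.inr.injEq] at hw; rw [hw]; exact hl1
        rw [hW, starW_singleton_inr]
        exact Or.inr (Or.inr (Or.inr (Or.inl ⟨l1, rfl⟩)))
      · rw [Set.not_subsingleton_iff] at hsub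
        obtain ⟨l, hlW, m, hmW, hlm⟩ := hsub
        rcases (sub_two_lines hG2 hlW hmW hlm).eq_empty_or_singleton with h | ⟨x, h⟩
        · exact Or.inr (Or.inl h)
        · exact Or.inr (Or.inr (Or.inl ⟨x, h⟩))
    · -- only points in W
      by_cases hsub : {p : α | Sum.inl p ∈ W}.Subsingleton
      · have hW : W = {Sum.inl p1} := by
          ext w
          cases w with
          | inl q =>
            simp only [Set.mem_singleton_iff]
            constructor
            · intro hw; rw [Sum.inl.injEq]; exact hsub hw hp1
            · intro hw; rw [Sum.inl.injEq] at hw; rw [hw]; exact hp1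
          | inr m =>
            simp only [Set.mem_singleton_iff]
            constructor
            · intro hw; exact absurd hw (by simpa using Set.eq_empty_iff_forall_notMem.mp hl m)
            · intro hw; exact absurd hw (by simp)
        rw [hW, starW_singleton_inl]
        exact Or.inr (Or.inr (Or.inr (Or.inr ⟨p1, rfl⟩)))
      · rw [Set.not_subsingleton_iff] at hsub
        obtain ⟨p, hpW, q, hqW, hpq⟩ := hsub
        rcases (sub_two_points hG2 hpW hqW hpq).eq_empty_or_singleton with h | ⟨x, h⟩
        · exact Or.inr (Or.inl h)
        · exact Or.inr (Or.inr (Or.inl ⟨x, h⟩))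
    · -- mixed: starW = ∅
      refine Or.inr (Or.inl (Set.eq_empty_iff_forall_notMem.mpr ?_))
      intro v hv
      cases v with
      | inl q => exact hv (Sum.inl p1) hp1
      | inr m => exact hv (Sum.inr l1) hl1
  · intro h
    rcases h with rfl | rfl | ⟨x, rfl⟩ | ⟨l, rfl⟩ | ⟨p, rfl⟩
    · exact ⟨∅, starW_empty.symm⟩
    · obtain ⟨l0, hl0⟩ := hL
      exact ⟨{Sum.inl (Classical.arbitrary α), Sum.inr ⟨l0, hl0⟩},
        (starW_mixed _ _).symm⟩
    · cases x with
      | inl p =>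
        obtain ⟨l, hl, l', hl', hne, hpl, hpl'⟩ := hdeg p
        exact ⟨{Sum.inr ⟨l, hl⟩, Sum.inr ⟨l', hl'⟩},
          (starW_two_lines hG2 (fun h => hne (congrArg Subtype.val h)) hpl hpl').symm⟩
      | inr l =>
        obtain ⟨p, hp, q, hq, hpq⟩ := hG3 l.1 l.2
        exact ⟨{Sum.inl p, Sum.inl q}, (starW_two_points hG2 hpq hp hq).symm⟩
    · exact ⟨{Sum.inr l}, (starW_singleton_inr l).symm⟩
    · exact ⟨{Sum.inl p}, (starW_singleton_inl p).symm⟩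


/-- "Big" flats: lines and pencils. -/
def Big (L : Set (Set α)) (S : Set (α ⊕ ↥L)) : Prop :=
  (∃ l : ↥L, S = Sum.inl '' l.1) ∨
    (∃ p : α, S = {x : α ⊕ ↥L | ∃ l : ↥L, x = Sum.inr l ∧ p ∈ l.1})

lemma big_two (hG3 : ∀ l ∈ L, ∃ p ∈ l, ∃ q ∈ l, p ≠ q)
    (hdeg : ∀ p : α, ∃ l ∈ L, ∃ l' ∈ L, l ≠ l' ∧ p ∈ l ∧ p ∈ l')
    {S : Set (α ⊕ ↥L)} (hS : Big L S) :
    ∃ a ∈ S, ∃ b ∈ S, a ≠ b := by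
  rcases hS with ⟨l, rfl⟩ | ⟨p, rfl⟩
  · obtain ⟨p, hp, q, hq, hpq⟩ := hG3 l.1 l.2
    exact ⟨Sum.inl p, ⟨p, hp, rfl⟩, Sum.inl q, ⟨q, hq, rfl⟩,
      fun h => hpq (Sum.inl.inj h)⟩
  · obtain ⟨l, hl, l', hl', hne, hpl, hpl'⟩ := hdeg p
    refine ⟨Sum.inr ⟨l, hl⟩, ⟨⟨l, hl⟩, rfl, hpl⟩, Sum.inr ⟨l', hl'⟩, ⟨⟨l', hl'⟩, rfl, hpl'⟩, ?_⟩
    intro h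
    exact hne (congrArg Subtype.val (Sum.inr.inj h))

lemma big_ne_univ [Nonempty α] (hL : L.Nonempty) {S : Set (α ⊕ ↥L)} (hS : Big L S) :
    S ≠ Set.univ := by
  rcases hS with ⟨l, rfl⟩ | ⟨p, rfl⟩
  · obtain ⟨l0, hl0⟩ := hL
    intro h
    have : Sum.inr (⟨l0, hl0⟩ : ↥L) ∈ Sum.inl '' l.1 := h ▸ Set.mem_univ _
    obtain ⟨q, _, hq⟩ := this
    exact Sum.inl_ne_inr hq
  · intro h
    have : Sum.inl (Classical.arbitrary α) ∈
        {x : α ⊕ ↥L | ∃ l : ↥L, x = Sum.inr l ∧ p ∈ l.1} := h ▸ Set.mem_univ _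
    obtain ⟨l, hl, -⟩ := this
    exact Sum.inl_ne_inr hl

lemma big_subset (hG2 : ∀ l ∈ L, ∀ l' ∈ L, l ≠ l' → (l ∩ l' : Set α).Subsingleton)
    (hG3 : ∀ l ∈ L, ∃ p ∈ l, ∃ q ∈ l, p ≠ q)
    (hdeg : ∀ p : α, ∃ l ∈ L, ∃ l' ∈ L, l ≠ l' ∧ p ∈ l ∧ p ∈ l')
    {S T : Set (α ⊕ ↥L)} (hS : Big L S) (hT : Big L T) (hST : S ⊆ T) : S = T := by
  rcases hS with ⟨l, rfl⟩ | ⟨p, rfl⟩ <;> rcases hT with ⟨m, rfl⟩ | ⟨q, rfl⟩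
  · -- line ⊆ line
    by_cases hlm : l = m
    · rw [hlm]
    · exfalso
      obtain ⟨p, hp, q, hq, hpq⟩ := hG3 l.1 l.2
      have hpm : p ∈ m.1 := by
        obtain ⟨p', hp', he⟩ := hST ⟨p, hp, rfl⟩
        rwa [← Sum.inl.inj he]
      have hqm : q ∈ m.1 := by
        obtain ⟨q', hq', he⟩ := hST ⟨q, hq, rfl⟩
        rwa [← Sum.inl.inj he]
      exact hpq (hG2 l.1 l.2 m.1 m.2 (fun h => hlm (Subtype.ext h)) ⟨hp, hpm⟩ ⟨hq, hqm⟩)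
  · -- line ⊆ pencil : impossible
    exfalso
    obtain ⟨p, hp, -⟩ := hG3 l.1 l.2
    obtain ⟨n, hn, -⟩ := hST ⟨p, hp, rfl⟩
    exact Sum.inl_ne_inr hn
  · -- pencil ⊆ line : impossible
    exfalso
    obtain ⟨l, hl, l', hl', hne, hpl, hpl'⟩ := hdeg p
    obtain ⟨r, -, hr⟩ := hST ⟨⟨l, hl⟩, rfl, hpl⟩
    exact Sum.inl_ne_inr hr
  · -- pencil ⊆ pencil
    by_cases hpq : p = q
    · rw [hpq]
    · exfalso
      obtain ⟨l, hl, l', hl', hne, hpl, hpl'⟩ := hdeg p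
      obtain ⟨n, hn, hqn⟩ := hST ⟨⟨l, hl⟩, rfl, hpl⟩
      obtain ⟨n', hn', hqn'⟩ := hST ⟨⟨l', hl'⟩, rfl, hpl'⟩
      rw [Sum.inr.injEq] at hn hn'
      rw [← hn] at hqn
      rw [← hn'] at hqn'
      exact hpq (hG2 l hl l' hl' hne ⟨hpl, hpl'⟩ ⟨hqn, hqn'⟩)

end FlatsLeviAux

theorem flats_levi_and_jordan_dedekind {α : Type*} [Fintype α] [Nonempty α]
    (L : Set (Set α)) (hL : L.Nonempty)
    (hG1 : ∀ p : α, ∃ l ∈ L, p ∈ l)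
    (hG2 : ∀ l ∈ L, ∀ l' ∈ L, l ≠ l' → (l ∩ l' : Set α).Subsingleton)
    (hG3 : ∀ l ∈ L, ∃ p ∈ l, ∃ q ∈ l, p ≠ q)
    (hconn : ∀ L₁ L₂ : Set (Set α), L₁ ∪ L₂ = L → Disjoint L₁ L₂ →
      L₁.Nonempty → L₂.Nonempty → ((⋃₀ L₁) ∩ (⋃₀ L₂)).Nonempty)
    (hdeg : ∀ p : α, ∃ l ∈ L, ∃ l' ∈ L, l ≠ l' ∧ p ∈ l ∧ p ∈ l') :
    flats (levi L) =
      {Set.univ, ∅} ∪ {S | ∃ x : α ⊕ ↥L, S = {x}} ∪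
        {S | ∃ l : ↥L, S = Sum.inl '' l.1} ∪
        {S | ∃ p : α, S = {x | ∃ l : ↥L, x = Sum.inr l ∧ p ∈ l.1}} ∧
    ∀ C : Set (Set (α ⊕ ↥L)), C ⊆ flats (levi L) → IsChain (· ⊆ ·) C →
      (∀ C', C ⊆ C' → C' ⊆ flats (levi L) → IsChain (· ⊆ ·) C' → C' = C) →
      C.ncard = 4 := by
  have hflat := FlatsLeviAux.flats_iff hL hG2 hG3 hdeg
  constructor
  · ext X
    rw [hflat X]
    simp only [Set.mem_union, Set.mem_insert_iff, Set.mem_singleton_iff, Set.mem_setOf_eq]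
    tauto
  · intro C hCF hchain hmax
    have p0 : α := Classical.arbitrary α
    obtain ⟨l0v, hl0⟩ := hL
    have l0 : ↥L := ⟨l0v, hl0⟩
    have hclass : ∀ S ∈ C, S = Set.univ ∨ S = ∅ ∨ (∃ x, S = {x}) ∨ FlatsLeviAux.Big L S := by
      intro S hS
      rcases (hflat S).mp (hCF hS) with h | h | h | h | h
      · exact Or.inl h
      · exact Or.inr (Or.inl h)
      · exact Or.inr (Or.inr (Or.inl h))
      · exact Or.inr (Or.inr (Or.inr (Or.inl h)))
      · exact Or.inr (Or.inr (Or.inr (Or.inr h)))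
    have hbigF : ∀ S : Set (α ⊕ ↥L), FlatsLeviAux.Big L S → S ∈ flats (levi L) := by
      intro S hS
      rcases hS with h | h
      · exact (hflat S).mpr (Or.inr (Or.inr (Or.inr (Or.inl h))))
      · exact (hflat S).mpr (Or.inr (Or.inr (Or.inr (Or.inr h))))
    -- ∅ and univ are in C
    have h0C : (∅ : Set (α ⊕ ↥L)) ∈ C := by
      have hsubF : insert ∅ C ⊆ flats (levi L) := by
        rintro S (rfl | hS)
        · exact (hflat _).mpr (Or.inr (Or.inl rfl))
        · exact hCF hS
      have h := hmax _ (Set.subset_insert _ _) hsubF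
        (hchain.insert (fun S _ _ => Or.inl (Set.empty_subset S)))
      exact h ▸ Set.mem_insert _ _
    have huC : (Set.univ : Set (α ⊕ ↥L)) ∈ C := by
      have hsubF : insert Set.univ C ⊆ flats (levi L) := by
        rintro S (rfl | hS)
        · exact (hflat _).mpr (Or.inl rfl)
        · exact hCF hS
      have h := hmax _ (Set.subset_insert _ _) hsubF
        (hchain.insert (fun S _ _ => Or.inr (Set.subset_univ S)))
      exact h ▸ Set.mem_insert _ _
    have hsingle : ∀ x y : α ⊕ ↥L, {x} ∈ C → {y} ∈ C → x = y := by
      intro x y hx hy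
      by_cases hxy : ({x} : Set (α ⊕ ↥L)) = {y}
      · exact Set.singleton_eq_singleton_iff.mp hxy
      · rcases hchain hx hy hxy with h | h
        · exact h rfl
        · exact (h rfl).symm
    -- there is a singleton in C
    have hxC : ∃ x : α ⊕ ↥L, {x} ∈ C := by
      by_contra hno
      push_neg at hno
      by_cases hbig : ∃ B ∈ C, FlatsLeviAux.Big L B
      · obtain ⟨B, hBC, hBbig⟩ := hbig
        obtain ⟨a, haB, -⟩ := FlatsLeviAux.big_two hG3 hdeg hBbig
        have hch : IsChain (· ⊆ ·) (insert {a} C) := by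
          refine hchain.insert ?_
          intro S hS _
          rcases hclass S hS with rfl | rfl | ⟨y, rfl⟩ | hSbig
          · exact Or.inl (Set.subset_univ _)
          · exact Or.inr (Set.empty_subset _)
          · exact absurd hS (hno y)
          · by_cases hSB : S = B
            · subst hSB; exact Or.inl (Set.singleton_subset_iff.mpr haB)
            · rcases hchain hBC hS (fun h => hSB h.symm) with h | h
              · exact absurd (FlatsLeviAux.big_subset hG2 hG3 hdeg hBbig hSbig h)
                  (fun h' => hSB h'.symm)
              · exact absurd (FlatsLeviAux.big_subset hG2 hG3 hdeg hSbig hBbig h) hSB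
        have hsubF : insert {a} C ⊆ flats (levi L) := by
          rintro S (rfl | hS)
          · exact (hflat _).mpr (Or.inr (Or.inr (Or.inl ⟨a, rfl⟩)))
          · exact hCF hS
        have h := hmax _ (Set.subset_insert _ _) hsubF hch
        exact hno a (h ▸ Set.mem_insert _ _)
      · push_neg at hbig
        have hch : IsChain (· ⊆ ·) (insert {Sum.inl p0} C) := by
          refine hchain.insert ?_
          intro S hS _
          rcases hclass S hS with rfl | rfl | ⟨y, rfl⟩ | hSbig
          · exact Or.inl (Set.subset_univ _)
          · exact Or.inr (Set.empty_subset _)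
          · exact absurd hS (hno y)
          · exact absurd hSbig (hbig S hS)
        have hsubF : insert {Sum.inl p0} C ⊆ flats (levi L) := by
          rintro S (rfl | hS)
          · exact (hflat _).mpr (Or.inr (Or.inr (Or.inl ⟨_, rfl⟩)))
          · exact hCF hS
        have h := hmax _ (Set.subset_insert _ _) hsubF hch
        exact hno _ (h ▸ Set.mem_insert _ _)
    obtain ⟨x, hxC⟩ := hxC
    -- there is a Big flat in C
    have hBex : ∃ B ∈ C, FlatsLeviAux.Big L B := by
      by_contra hno
      push_neg at hno
      have hB : ∃ B : Set (α ⊕ ↥L), FlatsLeviAux.Big L B ∧ x ∈ B := by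
        cases x with
        | inl p =>
          obtain ⟨l, hl, hpl⟩ := hG1 p
          exact ⟨Sum.inl '' (⟨l, hl⟩ : ↥L).1, Or.inl ⟨⟨l, hl⟩, rfl⟩, ⟨p, hpl, rfl⟩⟩
        | inr l =>
          obtain ⟨p, hp, -⟩ := hG3 l.1 l.2
          exact ⟨{y : α ⊕ ↥L | ∃ m : ↥L, y = Sum.inr m ∧ p ∈ m.1},
            Or.inr ⟨p, rfl⟩, ⟨l, rfl, hp⟩⟩
      obtain ⟨B, hBbig, hxB⟩ := hB
      have hch : IsChain (· ⊆ ·) (insert B C) := by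
        refine hchain.insert ?_
        intro S hS _
        rcases hclass S hS with rfl | rfl | ⟨y, rfl⟩ | hSbig
        · exact Or.inl (Set.subset_univ _)
        · exact Or.inr (Set.empty_subset _)
        · have : y = x := hsingle y x hS hxC
          subst this
          exact Or.inr (Set.singleton_subset_iff.mpr hxB)
        · exact absurd hSbig (hno S hS)
      have hsubF : insert B C ⊆ flats (levi L) := by
        rintro S (rfl | hS)
        · exact hbigF _ hBbig
        · exact hCF hS
      have h := hmax _ (Set.subset_insert _ _) hsubF hch
      exact hno B (h ▸ Set.mem_insert _ _) hBbig
    obtain ⟨B, hBmem, hBbig⟩ := hBex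
    have hCeq : C = {∅, {x}, B, Set.univ} := by
      apply Set.Subset.antisymm
      · intro S hS
        rcases hclass S hS with rfl | rfl | ⟨y, rfl⟩ | hSbig
        · exact Or.inr (Or.inr (Or.inr rfl))
        · exact Or.inl rfl
        · exact Or.inr (Or.inl (by rw [hsingle y x hS hxC]))
        · by_cases hSB : S = B
          · exact Or.inr (Or.inr (Or.inl hSB))
          · rcases hchain hS hBmem hSB with h | h
            · exact Or.inr (Or.inr (Or.inl
                (FlatsLeviAux.big_subset hG2 hG3 hdeg hSbig hBbig h)))
            · exact Or.inr (Or.inr (Or.inl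
                (FlatsLeviAux.big_subset hG2 hG3 hdeg hBbig hSbig h).symm))
      · rintro S (rfl | rfl | rfl | rfl)
        exacts [h0C, hxC, hBmem, huC]
    obtain ⟨a, haB, b, hbB, hab⟩ := FlatsLeviAux.big_two hG3 hdeg hBbig
    have hBne : B ≠ ∅ := fun h => absurd (h ▸ haB) (Set.notMem_empty a)
    have hBns : B ≠ {x} := by
      intro h
      rw [h, Set.mem_singleton_iff] at haB hbB
      exact hab (haB.trans hbB.symm)
    have hBnu : B ≠ Set.univ := FlatsLeviAux.big_ne_univ ⟨l0v, hl0⟩ hBbig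
    have hxu : ({x} : Set (α ⊕ ↥L)) ≠ Set.univ := by
      intro h
      have h1 : Sum.inl p0 ∈ ({x} : Set (α ⊕ ↥L)) := h ▸ Set.mem_univ _
      have h2 : Sum.inr l0 ∈ ({x} : Set (α ⊕ ↥L)) := h ▸ Set.mem_univ _
      rw [Set.mem_singleton_iff] at h1 h2
      exact Sum.inl_ne_inr (h1.trans h2.symm)
    rw [hCeq]
    rw [Set.ncard_insert_of_notMem (by
        rintro (h | h | h)
        · exact Set.singleton_ne_empty x h.symm
        · exact hBne h.symm
        · exact Set.empty_ne_univ h)]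
    rw [Set.ncard_insert_of_notMem (by
        rintro (h | h)
        · exact hBns h.symm
        · exact hxu h)]
    rw [Set.ncard_insert_of_notMem (by
        rintro h
        exact hBnu h)]
    rw [Set.ncard_singleton]
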